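/- Let n ≥ 1, Π1 ≥ 0, Π2 > 0, Π3 > 0, Π4 > 0, and suppose Π3 = Π4 and Π1 = 2/Π4. Define K̂0(k) := D_k + √(D_k² + Π3²·(1 − Π1·D_k)) and L̂0(k) := D_k/Π4 + √(D_k²/Π4² − Π1·D_k + 1). Then the physical-space LQG gain matrices, defined entrywise for j, l ∈ {0,…,n−1} by (K₁)_{jl} := (1/n)·Σ_{k=0}^{n−1} K̂0(k)·exp(2πi·k·(j−l)/n), (K₂)_{jl} := (1/n)·Σ_{k=0}^{n−1} √(2·K̂0(k) + Π2·Π3²)·exp(2πi·k·(j−l)/n), (L₁)_{jl} := (1/n)·Σ_{k=0}^{n−1} √(2·L̂0(k)/Π4)·exp(2πi·k·(j−l)/n), (L₂)_{jl} := (1/n)·Σ_{k=0}^{n−1} L̂0(k)·exp(2πi·k·(j−l)/n), are all scalar multiples of the identity: K₁ = Π3·I, K₂ = √(2·Π3 + Π2·Π3²)·I, L₁ = √(2/Π4)·I, and L₂ = I. Hence the optimal LQG controller is completely decentralized. -/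

import Mathlib

open Matrix
/-- The `k`-th eigenvalue `−4·sin²(πk/n)` of the discrete periodic Laplacian. -/
noncomputable def Dlap (n k : ℕ) : ℝ := -4 * Real.sin (Real.pi * k / n) ^ 2

/-- The scalar Fourier-domain LQR gain at spatial frequency `k`. -/
noncomputable def Khat0 (n : ℕ) (Pi1 Pi3 : ℝ) (k : ℕ) : ℝ :=
  Dlap n k + Real.sqrt ((Dlap n k) ^ 2 + Pi3 ^ 2 * (1 - Pi1 * Dlap n k))

/-- The scalar Fourier-domain Kalman filter gain at spatial frequency `k`. -/
noncomputable def Lhat0 (n : ℕ) (Pi1 Pi4 : ℝ) (k : ℕ) : ℝ :=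
  Dlap n k / Pi4 + Real.sqrt ((Dlap n k) ^ 2 / Pi4 ^ 2 - Pi1 * Dlap n k + 1)

/-- The physical-space gain block `F⁻¹·diag(f(k))·F` recovered from a
frequency-domain gain `f` by the inverse discrete Fourier transform: its
`(j,l)` entry is `(1/n)·Σ_{k=0}^{n−1} f(k)·exp(2πi·k·(j−l)/n)`. -/
noncomputable def idftMatrix (n : ℕ) (f : ℕ → ℝ) : Matrix (Fin n) (Fin n) ℂ :=
  fun j l => (1 / (n : ℂ)) * ∑ k : Fin n, ((f (k : ℕ) : ℝ) : ℂ) *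
    Complex.exp (2 * (Real.pi : ℂ) * Complex.I * ((k : ℕ) : ℂ) *
      (((((j : ℕ) : ℤ) - ((l : ℕ) : ℤ)) : ℤ) : ℂ) / (n : ℂ))


lemma idft_const (n : ℕ) (hn : 1 ≤ n) (c : ℝ) :
    (fun j l => (1 / (n : ℂ)) * ∑ k : Fin n, ((c : ℝ) : ℂ) *
      Complex.exp (2 * (Real.pi : ℂ) * Complex.I * ((k : ℕ) : ℂ) *
        (((((j : ℕ) : ℤ) - ((l : ℕ) : ℤ)) : ℤ) : ℂ) / (n : ℂ)) :
      Matrix (Fin n) (Fin n) ℂ) = (c : ℂ) • (1 : Matrix (Fin n) (Fin n) ℂ) := by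
  have hn0 : (n : ℂ) ≠ 0 := by exact_mod_cast Nat.pos_iff_ne_zero.mp hn
  funext j l
  by_cases hjl : j = l
  · subst hjl
    simp [Matrix.one_apply, Matrix.smul_apply, Finset.mul_sum]
    field_simp
  · set m : ℤ := ((j : ℕ) : ℤ) - ((l : ℕ) : ℤ) with hm
    have hm0 : m ≠ 0 := by
      simp only [hm, sub_ne_zero]
      exact_mod_cast fun h => hjl (Fin.ext (by exact_mod_cast h))
    have hmlt : m.natAbs < n := by
      rcases abs_cases m with ⟨h1, _⟩ | ⟨h1, _⟩ <;>
        · have := j.isLt; have := l.isLt; omega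
    set w : ℂ := 2 * (Real.pi : ℂ) * Complex.I * (m : ℂ) / (n : ℂ) with hw
    have hexp : ∀ k : Fin n, Complex.exp (2 * (Real.pi : ℂ) * Complex.I * ((k : ℕ) : ℂ) *
        (m : ℂ) / (n : ℂ)) = Complex.exp w ^ (k : ℕ) := by
      intro k
      rw [← Complex.exp_nat_mul]
      congr 1
      rw [hw]; field_simp
    have hz1 : Complex.exp w ≠ 1 := by
      intro h
      rw [Complex.exp_eq_one_iff] at h
      obtain ⟨t, ht⟩ := h
      rw [hw] at ht
      have hpi : (Real.pi : ℂ) ≠ 0 := by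
        exact_mod_cast Real.pi_ne_zero
      have hC : (m : ℂ) = (t : ℂ) * (n : ℂ) := by
        field_simp at ht
        have h2 : (2 : ℂ) * (Real.pi : ℂ) * Complex.I ≠ 0 := by
          simp [Complex.I_ne_zero, hpi]
        have ht' : 2 * (Real.pi : ℂ) * Complex.I * (m : ℂ)
            = 2 * (Real.pi : ℂ) * Complex.I * ((t : ℂ) * (n : ℂ)) := by
          rw [ht]; ring
        exact mul_left_cancel₀ h2 ht'
      have hZ : m = t * n := by exact_mod_cast hC
      rcases eq_or_ne t 0 with rfl | ht0
      · simp [hZ] at hm0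
      · have : (n : ℤ) ≤ |m| := by
          rw [hZ, abs_mul]
          have : 1 ≤ |t| := Int.one_le_abs ht0
          nlinarith [abs_nonneg (t:ℤ), Int.abs_natCast n]
        have := Int.abs_eq_natAbs m ▸ this
        omega
    have hzn : Complex.exp w ^ n = 1 := by
      rw [← Complex.exp_nat_mul]
      have : (n : ℂ) * w = (m : ℂ) * (2 * Real.pi * Complex.I) := by
        rw [hw]; field_simp
      rw [this]
      exact_mod_cast Complex.exp_int_mul_two_pi_mul_I m
    have hsum : ∑ k : Fin n, Complex.exp w ^ (k : ℕ) = 0 := by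
      rw [Fin.sum_univ_eq_sum_range, geom_sum_eq hz1, hzn]
      simp
    simp only [hexp]
    rw [← Finset.mul_sum, hsum]
    simp [Matrix.one_apply, hjl, Matrix.smul_apply]


lemma Dlap_nonpos (n k : ℕ) : Dlap n k ≤ 0 := by
  unfold Dlap
  nlinarith [sq_nonneg (Real.sin (Real.pi * k / n))]

lemma Khat0_eq (n : ℕ) (Pi3 Pi4 : ℝ) (hPi4 : 0 < Pi4) (hPi3 : 0 < Pi3)
    (h34 : Pi3 = Pi4) (k : ℕ) : Khat0 n (2 / Pi4) Pi3 k = Pi3 := by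
  have hD := Dlap_nonpos n k
  unfold Khat0
  have h : (Dlap n k) ^ 2 + Pi3 ^ 2 * (1 - (2 / Pi4) * Dlap n k)
      = (Pi3 - Dlap n k) ^ 2 := by
    subst h34; field_simp; ring
  rw [h, Real.sqrt_sq (by linarith)]
  ring

lemma Lhat0_eq (n : ℕ) (Pi4 : ℝ) (hPi4 : 0 < Pi4) (k : ℕ) :
    Lhat0 n (2 / Pi4) Pi4 k = 1 := by
  have hD := Dlap_nonpos n k
  unfold Lhat0
  have h : (Dlap n k) ^ 2 / Pi4 ^ 2 - (2 / Pi4) * Dlap n k + 1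
      = (1 - Dlap n k / Pi4) ^ 2 := by
    field_simp; ring
  have hD4 : Dlap n k / Pi4 ≤ 0 := div_nonpos_of_nonpos_of_nonneg hD hPi4.le
  rw [h, Real.sqrt_sq (by linarith)]
  ring

lemma idftMatrix_const (n : ℕ) (hn : 1 ≤ n) (c : ℝ) (f : ℕ → ℝ)
    (hf : ∀ k, k < n → f k = c) :
    idftMatrix n f = (c : ℂ) • (1 : Matrix (Fin n) (Fin n) ℂ) := by
  rw [← idft_const n hn c]
  unfold idftMatrix
  funext j l
  congr 1
  refine Finset.sum_congr rfl fun k _ => ?_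
  rw [hf k k.isLt]


/-- When `Π3 = Π4` and `Π1 = 2/Π4`, all four physical-space LQG gain blocks
`K₁, K₂, L₁, L₂` (inverse DFTs of the frequency-domain gains) are scalar
multiples of the identity, i.e. the optimal LQG controller is completely
decentralized. -/
theorem lqg_completely_decentralized (n : ℕ) (hn : 1 ≤ n)
    (Pi1 Pi2 Pi3 Pi4 : ℝ) (hPi1 : 0 ≤ Pi1) (hPi2 : 0 < Pi2) (hPi3 : 0 < Pi3)
    (hPi4 : 0 < Pi4) (h34 : Pi3 = Pi4) (h14 : Pi1 = 2 / Pi4) :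
    idftMatrix n (fun k => Khat0 n Pi1 Pi3 k) = ((Pi3 : ℝ) : ℂ) • (1 : Matrix (Fin n) (Fin n) ℂ) ∧
    idftMatrix n (fun k => Real.sqrt (2 * Khat0 n Pi1 Pi3 k + Pi2 * Pi3 ^ 2)) =
      ((Real.sqrt (2 * Pi3 + Pi2 * Pi3 ^ 2) : ℝ) : ℂ) • (1 : Matrix (Fin n) (Fin n) ℂ) ∧
    idftMatrix n (fun k => Real.sqrt (2 * Lhat0 n Pi1 Pi4 k / Pi4)) =
      ((Real.sqrt (2 / Pi4) : ℝ) : ℂ) • (1 : Matrix (Fin n) (Fin n) ℂ) ∧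
    idftMatrix n (fun k => Lhat0 n Pi1 Pi4 k) = (1 : Matrix (Fin n) (Fin n) ℂ) := by
  subst h14
  have hK : ∀ k, k < n → Khat0 n (2 / Pi4) Pi3 k = Pi3 :=
    fun k _ => Khat0_eq n Pi3 Pi4 hPi4 hPi3 h34 k
  have hL : ∀ k, k < n → Lhat0 n (2 / Pi4) Pi4 k = 1 :=
    fun k _ => Lhat0_eq n Pi4 hPi4 k
  refine ⟨?_, ?_, ?_, ?_⟩
  · exact idftMatrix_const n hn Pi3 _ hK
  · exact idftMatrix_const n hn (Real.sqrt (2 * Pi3 + Pi2 * Pi3 ^ 2)) _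
      (fun k hk => by rw [hK k hk])
  · exact idftMatrix_const n hn (Real.sqrt (2 / Pi4)) _
      (fun k hk => by rw [hL k hk]; norm_num)
  · have := idftMatrix_const n hn 1 (fun k => Lhat0 n (2 / Pi4) Pi4 k) hL
    simpa using this
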